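/- Let y : ℝ → ℝ be continuously differentiable with y and y' Lebesgue integrable on ℝ, and let f : ℝ → ℝ be continuously differentiable with f and f' bounded. Then ∫_ℝ f(x)·y'(x)·sgn(y(x)) dx = −∫_ℝ f'(x)·|y(x)| dx, where sgn(r) = r/|r| for r ≠ 0 and sgn(0) = 0. -/

import Mathlib

open MeasureTheory Set Filter Topology Asymptotics

theorem drift_sign_integration_by_parts
    (y f : ℝ → ℝ) (hy : ContDiff ℝ 1 y)
    (hyi : Integrable y) (hy'i : Integrable (deriv y))
    (hf : ContDiff ℝ 1 f)
    (Mf Mf' : ℝ) (hfb : ∀ x : ℝ, |f x| ≤ Mf) (hf'b : ∀ x : ℝ, |deriv f x| ≤ Mf') :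
    ∫ x : ℝ, f x * deriv y x * Real.sign (y x) = -∫ x : ℝ, deriv f x * |y x| := by
  have hyd : ∀ x, HasDerivAt y (deriv y x) x :=
    fun x => ((hy.differentiable one_ne_zero) x).hasDerivAt
  have hfd : ∀ x, HasDerivAt f (deriv f x) x :=
    fun x => ((hf.differentiable one_ne_zero) x).hasDerivAt
  have hyc : Continuous y := hy.continuous
  have hy'c : Continuous (deriv y) := hy.continuous_deriv le_rfl
  have hf'c : Continuous (deriv f) := hf.continuous_deriv le_rfl
  have hMf : 0 ≤ Mf := le_trans (abs_nonneg _) (hfb 0)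
  -- the right derivative of |y|
  set c : ℝ → ℝ := fun x => if y x = 0 then |deriv y x| else deriv y x * Real.sign (y x) with hc
  set g : ℝ → ℝ := fun x => f x * |y x| with hg
  set G' : ℝ → ℝ := fun x => deriv f x * |y x| + f x * c x with hG'
  set F : ℝ → ℝ := fun x => deriv f x * |y x| + f x * (deriv y x * Real.sign (y x)) with hF
  -- right derivative of |y| everywhere
  have habs : ∀ x, HasDerivWithinAt (fun t => |y t|) (c x) (Ioi x) x := by
    intro x
    by_cases h0 : y x = 0
    · rw [hc]; simp only [h0, if_pos]
      rw [hasDerivWithinAt_iff_isLittleO]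
      have hlo : (fun t => y t - y x - (t - x) • deriv y x) =o[𝓝 x] fun t => t - x :=
        hasDerivAt_iff_isLittleO.mp (hyd x)
      have hlo' := hlo.mono (nhdsWithin_le_nhds (s := Ioi x))
      refine (IsBigO.of_bound 1 ?_).trans_isLittleO hlo'
      filter_upwards [self_mem_nhdsWithin] with t ht
      have htx : (0:ℝ) ≤ t - x := by simp only [mem_Ioi] at ht; linarith
      have key : |y t| - |y x| - (t - x) • |deriv y x| = |y t| - |(t - x) * deriv y x| := by
        rw [h0, abs_zero, sub_zero, smul_eq_mul, abs_mul, abs_of_nonneg htx]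
      rw [Real.norm_eq_abs, key, Real.norm_eq_abs, one_mul]
      calc |(|y t| - |(t - x) * deriv y x|)| ≤ |y t - (t - x) * deriv y x| :=
            abs_abs_sub_abs_le_abs_sub _ _
        _ = |y t - y x - (t - x) • deriv y x| := by rw [h0, sub_zero, smul_eq_mul]
    · have hd : HasDerivAt (fun t => |y t|) ((SignType.sign (y x) : ℝ) * deriv y x) x :=
        (hasDerivAt_abs h0).comp x (hyd x)
      have hval : (SignType.sign (y x) : ℝ) * deriv y x = c x := by
        rw [hc]; simp only [if_neg h0]
        rcases lt_trichotomy (y x) 0 with h | h | h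
        · rw [Real.sign_of_neg h, sign_neg h, SignType.coe_neg_one]; ring
        · exact absurd h h0
        · rw [Real.sign_of_pos h, sign_pos h, SignType.coe_one]; ring
      rw [← hval]
      exact hd.hasDerivWithinAt
  -- the exceptional set is countable
  have hS : Set.Countable {x | y x = 0 ∧ deriv y x ≠ 0} := by
    set S := {x | y x = 0 ∧ deriv y x ≠ 0} with hSdef
    have hiso : ∀ x ∈ S, ({x} : Set ℝ) ∈ 𝓝[S] x := by
      intro x hx
      have hne := (hyd x).eventually_ne (c := y x) hx.2
      rw [eventually_nhdsWithin_iff] at hne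
      rw [mem_nhdsWithin_iff_eventually]
      filter_upwards [hne] with z hz hzS
      simp only [mem_singleton_iff]
      by_contra hzx
      exact (hz (by simpa using hzx)) (by rw [hzS.1, hx.1])
    obtain ⟨t, hts, htc, htS⟩ := TopologicalSpace.countable_cover_nhdsWithin hiso
    refine htc.mono ?_
    rwa [Set.biUnion_of_singleton] at htS
  -- F = G' a.e.
  have hFG : F =ᵐ[volume] G' := by
    have hsub : {x | ¬ F x = G' x} ⊆ {x | y x = 0 ∧ deriv y x ≠ 0} := by
      intro x hx
      simp only [mem_setOf_eq] at hx ⊢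
      by_cases h0 : y x = 0
      · refine ⟨h0, fun h1 => hx ?_⟩
        simp [hF, hG', hc, h0, h1]
      · exact absurd (by simp only [hF, hG', hc, if_neg h0]) hx
    exact ae_iff.mpr (measure_mono_null hsub (hS.measure_zero volume))
  -- sign is bounded by 1
  have hsgn : ∀ r : ℝ, |Real.sign r| ≤ 1 := by
    intro r
    rcases lt_trichotomy r 0 with h | h | h
    · rw [Real.sign_of_neg h]; norm_num
    · rw [h, Real.sign_zero]; norm_num
    · rw [Real.sign_of_pos h]; norm_num
  -- measurability of sign ∘ y
  have hsm : Measurable fun x => Real.sign (y x) := by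
    have : (fun x => Real.sign (y x))
        = fun x => if y x < 0 then (-1:ℝ) else if 0 < y x then 1 else 0 := by
      funext x; rfl
    rw [this]
    exact Measurable.ite (measurableSet_lt hyc.measurable measurable_const) measurable_const
      (Measurable.ite (measurableSet_lt measurable_const hyc.measurable) measurable_const
        measurable_const)
  -- integrability
  have hI2 : Integrable (fun x => deriv f x * |y x|) := by
    refine hyi.abs.bdd_mul (c := Mf') hf'c.aestronglyMeasurable (Filter.Eventually.of_forall fun x => ?_)
    rw [Real.norm_eq_abs]; exact hf'b x
  have hI1 : Integrable (fun x => f x * (deriv y x * Real.sign (y x))) := by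
    refine Integrable.mono' (hy'i.abs.const_mul Mf) ?_ ?_
    · exact (hf.continuous.measurable.mul
        (hy'c.measurable.mul hsm)).aestronglyMeasurable
    · filter_upwards with x
      rw [Real.norm_eq_abs, abs_mul, abs_mul]
      calc |f x| * (|deriv y x| * |Real.sign (y x)|)
          ≤ Mf * (|deriv y x| * 1) :=
            mul_le_mul (hfb x)
              (mul_le_mul_of_nonneg_left (hsgn _) (abs_nonneg _)) (by positivity) hMf
        _ = Mf * |deriv y x| := by ring
  have hFi : Integrable F := hI2.add hI1
  have hG'i : Integrable G' := hFi.congr hFG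
  -- continuity of g
  have hgc : Continuous g := hf.continuous.mul hyc.abs
  -- FTC on each interval
  have hFTC : ∀ a b : ℝ, a ≤ b → ∫ x in a..b, F x = g b - g a := by
    intro a b hab
    have h1 : ∫ x in a..b, F x = ∫ x in a..b, G' x := by
      refine intervalIntegral.integral_congr_ae ?_
      filter_upwards [hFG] with x hx _ using hx
    rw [h1]
    refine intervalIntegral.integral_eq_sub_of_hasDeriv_right_of_le hab
      hgc.continuousOn (fun x _ => ?_) hG'i.intervalIntegrable
    exact ((hfd x).hasDerivWithinAt.mul (habs x))
  -- y tends to 0 at ±∞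
  have hytop : Tendsto y atTop (𝓝 0) :=
    tendsto_zero_of_hasDerivAt_of_integrableOn_Ioi (a := 0) (fun x _ => hyd x)
      hy'i.integrableOn hyi.integrableOn
  have hybot : Tendsto y atBot (𝓝 0) :=
    tendsto_zero_of_hasDerivAt_of_integrableOn_Iic (a := 0) (fun x _ => hyd x)
      hy'i.integrableOn hyi.integrableOn
  -- g tends to 0 at ±∞
  have hgb : ∀ x, ‖g x‖ ≤ Mf * |y x| := by
    intro x
    show ‖f x * |y x|‖ ≤ Mf * |y x|
    rw [Real.norm_eq_abs, abs_mul, abs_abs]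
    exact mul_le_mul_of_nonneg_right (hfb x) (abs_nonneg _)
  have hgtop : Tendsto g atTop (𝓝 0) := by
    refine squeeze_zero_norm hgb ?_
    have : Tendsto (fun x => Mf * |y x|) atTop (𝓝 (Mf * |(0:ℝ)|)) :=
      (tendsto_const_nhds).mul hytop.abs
    simpa using this
  have hgbot : Tendsto g atBot (𝓝 0) := by
    refine squeeze_zero_norm hgb ?_
    have : Tendsto (fun x => Mf * |y x|) atBot (𝓝 (Mf * |(0:ℝ)|)) :=
      (tendsto_const_nhds).mul hybot.abs
    simpa using this
  -- integral of F is 0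
  have hlim : Tendsto (fun n : ℕ => ∫ x in (-(n:ℝ))..(n:ℝ), F x) atTop (𝓝 (∫ x, F x)) :=
    intervalIntegral_tendsto_integral hFi
      (tendsto_neg_atBot_iff.mpr tendsto_natCast_atTop_atTop) tendsto_natCast_atTop_atTop
  have hlim2 : Tendsto (fun n : ℕ => ∫ x in (-(n:ℝ))..(n:ℝ), F x) atTop (𝓝 0) := by
    have heq : ∀ n : ℕ, ∫ x in (-(n:ℝ))..(n:ℝ), F x = g n - g (-(n:ℝ)) := by
      intro n
      exact hFTC _ _ (neg_le_self (Nat.cast_nonneg n))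
    rw [tendsto_congr heq]
    have : Tendsto (fun n : ℕ => g n - g (-(n:ℝ))) atTop (𝓝 (0 - 0)) :=
      (hgtop.comp tendsto_natCast_atTop_atTop).sub
        (hgbot.comp (tendsto_neg_atBot_iff.mpr tendsto_natCast_atTop_atTop))
    simpa using this
  have hF0 : ∫ x, F x = 0 := tendsto_nhds_unique hlim hlim2
  rw [hF, integral_add hI2 hI1] at hF0
  simp only [mul_assoc]
  linarith
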